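/- arXiv:2401.08248 — 4 statements merged into one kernel-verified Lean document; each statement's English description precedes it below -/
import Mathlib

section
/- Let D₂ = I₂ + I₂·τ + [[0,0],[θ,0]]·τ² ∈ M₂(K{τ}) where θ ∈ K. Then for every n ≥ 1, the coefficient of the highest power of τ appearing in D₂ⁿ (namely τ^{n+1}) is the matrix [[0,0],[x,0]] for some nonzero x ∈ F_q[θ] ⊆ K; in particular this leading coefficient is not invertible in M₂(K). -/
section Aux

variable {K R : Type*} [Field K] [Ring R] (ι : K →+* R) (τ : R) (q : ℕ)

def Ssum (f : ℕ → K) (N : ℕ) : R := ∑ k ∈ Finset.range (N + 1), ι (f k) * τ ^ k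

lemma Ssum_def (f : ℕ → K) (N : ℕ) :
    Ssum ι τ f N = ∑ k ∈ Finset.range (N + 1), ι (f k) * τ ^ k := rfl

lemma Ssum_extend {f : ℕ → K} {N M : ℕ} (hNM : N ≤ M) (h : ∀ j, N < j → f j = 0) :
    Ssum ι τ f M = Ssum ι τ f N := by
  refine (Finset.sum_subset (Finset.range_subset_range.2 (by omega)) fun x hx hxn => ?_).symm
  simp only [Finset.mem_range] at hx hxn
  rw [h x (by omega), map_zero, zero_mul]

lemma Ssum_add (f g : ℕ → K) (N : ℕ) :
    Ssum ι τ f N + Ssum ι τ g N = Ssum ι τ (fun k => f k + g k) N := by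
  unfold Ssum
  rw [← Finset.sum_add_distrib]
  exact Finset.sum_congr rfl fun k _ => by rw [map_add, add_mul]

lemma Ssum_mul_tau (f : ℕ → K) (N : ℕ) :
    Ssum ι τ f N * τ = Ssum ι τ (fun k => if k = 0 then 0 else f (k - 1)) (N + 1) := by
  unfold Ssum
  rw [Finset.sum_mul, Finset.sum_range_succ' _ (N + 1)]
  simp [mul_assoc, ← pow_succ]

lemma tauPow (twist : ∀ a : K, τ * ι a = ι (a ^ q) * τ) :
    ∀ (k : ℕ) (x : K), τ ^ k * ι x = ι (x ^ q ^ k) * τ ^ k := by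
  intro k
  induction k with
  | zero => intro x; simp
  | succ k ih =>
    intro x
    rw [pow_succ, mul_assoc, twist, ← mul_assoc, ih, ← pow_mul, ← pow_succ', ← mul_assoc]

lemma Ssum_mul_const (twist : ∀ a : K, τ * ι a = ι (a ^ q) * τ) (f : ℕ → K) (N : ℕ) (b : K) :
    Ssum ι τ f N * ι b = Ssum ι τ (fun k => f k * b ^ q ^ k) N := by
  unfold Ssum
  rw [Finset.sum_mul]
  refine Finset.sum_congr rfl fun k _ => ?_
  rw [mul_assoc, tauPow ι τ q twist, ← mul_assoc, map_mul]

def ccA (θ : K) : ℕ → ℕ → K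
  | 0, _ => 0
  | n + 1, k =>
      ccA θ n k + (if k = 0 then 0 else ccA θ n (k - 1)) +
        (if 2 ≤ k then (n.choose (k - 2) : K) * θ ^ q ^ (k - 2) else 0)

lemma ccA_support (θ : K) : ∀ n j, n + 1 < j → ccA q θ n j = 0 := by
  intro n
  induction n with
  | zero => intro j _; rfl
  | succ n ih =>
    intro j hj
    have h1 : ccA q θ n j = 0 := ih j (by omega)
    have h2 : ccA q θ n (j - 1) = 0 := ih (j - 1) (by omega)
    have h3 : (n.choose (j - 2) : K) = 0 := by
      rw [Nat.choose_eq_zero_of_lt (by omega), Nat.cast_zero]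
    simp [ccA, h1, h2, h3]

lemma ccA_lead (θ : K) : ∀ n, ccA q θ n (n + 1) = ∑ i ∈ Finset.range n, θ ^ q ^ i := by
  intro n
  induction n with
  | zero => simp [ccA]
  | succ n ih =>
    have h1 : ccA q θ n (n + 2) = 0 := ccA_support q θ n _ (by omega)
    rw [Finset.sum_range_succ, ← ih]
    show ccA q θ n (n + 2) + _ + _ = _
    simp [h1]

def aaA (K : Type*) [Semiring K] : ℕ → ℕ → K := fun n k => (n.choose k : K)

end Aux

/-- Let `D₂ = I₂ + I₂·τ + [[0,0],[θ,0]]·τ² ∈ M₂(K{τ})` where `θ ∈ K` is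
transcendental over `F_q`.  Then for every `n ≥ 1`, the coefficient of the highest power
of `τ` appearing in `D₂ ^ n` (namely `τ ^ (n+1)`) is the matrix `[[0,0],[x,0]]` for some
nonzero `x ∈ F_q[θ] ⊆ K`; in particular this leading coefficient is not invertible in
`M₂(K)`.  The twisted polynomial ring `K{τ}` is axiomatized via `(R, ι, τ, coeff)`. -/
theorem leading_coeff_D2_pow (q : ℕ) (Fq K R : Type*)
    [Field Fq] [Fintype Fq] (hcard : Fintype.card Fq = q)
    [Field K] [Algebra Fq K] [Ring R]
    (θ : K) (hθ : Transcendental Fq θ)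
    (ι : K →+* R) (τ : R)
    (twist : ∀ a : K, τ * ι a = ι (a ^ q) * τ)
    (coeff : R → ℕ → K)
    (hrepr : ∀ x : R, ∃ N : ℕ,
      x = ∑ k ∈ Finset.range (N + 1), ι (coeff x k) * τ ^ k ∧ ∀ k > N, coeff x k = 0)
    (hcoeff : ∀ (N : ℕ) (a : ℕ → K),
      coeff (∑ k ∈ Finset.range (N + 1), ι (a k) * τ ^ k)
        = fun k => if k ≤ N then a k else 0)
    (D2 : Matrix (Fin 2) (Fin 2) R)
    (hD2 : D2 = !![1 + τ, 0; ι θ * τ ^ 2, 1 + τ]) :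
    ∀ n : ℕ, 1 ≤ n → ∃ x : K, x ≠ 0 ∧ x ∈ Algebra.adjoin Fq ({θ} : Set K) ∧
      (Matrix.of fun i j => coeff ((D2 ^ n) i j) (n + 1)) = !![(0 : K), 0; x, 0] ∧
      (∀ k, n + 1 < k → ∀ i j, coeff ((D2 ^ n) i j) k = 0) ∧
      ¬ IsUnit (!![(0 : K), 0; x, 0]) := by
  have hq2 : 2 ≤ q := by
    rw [← hcard]; exact Fintype.one_lt_card
  have haasupp : ∀ n j, n < j → (aaA K) n j = 0 := by
    intro n j hj
    simp only [aaA]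
    rw [Nat.choose_eq_zero_of_lt hj, Nat.cast_zero]
  have key : ∀ n : ℕ, D2 ^ n =
      !![Ssum ι τ ((aaA K) n) (n + 1), 0; Ssum ι τ ((ccA q θ) n) (n + 1), Ssum ι τ ((aaA K) n) (n + 1)] := by
    intro n
    induction n with
    | zero =>
      have h1 : Ssum ι τ ((aaA K) 0) 1 = 1 := by
        simp [Ssum_def, Finset.sum_range_succ, aaA]
      have h2 : Ssum ι τ ((ccA q θ) 0) 1 = 0 := by
        simp [Ssum_def, Finset.sum_range_succ, ccA, ccA]
      rw [pow_zero, h1, h2, Matrix.one_fin_two]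
    | succ n ih =>
      rw [pow_succ, ih, hD2, Matrix.mul_fin_two]
      have hA : Ssum ι τ ((aaA K) n) (n + 1) * (1 + τ) = Ssum ι τ ((aaA K) (n + 1)) (n + 2) := by
        rw [mul_add, mul_one, Ssum_mul_tau, show n + 1 + 1 = n + 2 from rfl,
          ← Ssum_extend ι τ (f := (aaA K) n) (N := n + 1) (M := n + 2) (by omega)
            (fun j hj => haasupp n j (by omega)),
          Ssum_add]
        refine congrArg₂ _ (funext fun k => ?_) rfl
        match k with
        | 0 => simp [aaA]
        | k + 1 =>
          simp only [aaA, Nat.add_eq_zero, and_false, if_neg, Nat.add_sub_cancel,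
            ite_false, OfNat.ofNat_ne_zero, one_ne_zero]
          rw [Nat.choose_succ_succ]
          push_cast
          ring
      have hC : Ssum ι τ ((ccA q θ) n) (n + 1) * (1 + τ) +
          Ssum ι τ ((aaA K) n) (n + 1) * (ι θ * τ ^ 2) = Ssum ι τ ((ccA q θ) (n + 1)) (n + 2) := by
        have hccsupp : ∀ j, n + 1 < j → (ccA q θ) n j = 0 := fun j hj => ccA_support q θ n j hj
        rw [mul_add, mul_one, Ssum_mul_tau, pow_two, ← mul_assoc, ← mul_assoc,
          Ssum_mul_const ι τ q twist, Ssum_mul_tau, Ssum_mul_tau,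
          ← Ssum_extend ι τ (f := (ccA q θ) n) (show n + 1 ≤ n + 3 by omega) hccsupp]
        rw [show n + 1 + 1 + 1 = n + 3 from rfl, show n + 1 + 1 = n + 2 from rfl]
        rw [← Ssum_extend ι τ (N := n + 2) (M := n + 3) (by omega)
          (fun j hj => by
            show (if j = 0 then (0 : K) else ccA q θ n (j - 1)) = 0
            rw [if_neg (show ¬ j = 0 by omega)]
            exact hccsupp (j - 1) (by omega))]
        rw [add_assoc, Ssum_add, Ssum_add,
          ← Ssum_extend ι τ (N := n + 2) (M := n + 3) (by omega)
            (fun j hj => ccA_support q θ (n + 1) j hj)]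
        refine congrArg₂ _ (funext fun k => ?_) rfl
        simp only [ccA, aaA]
        match k with
        | 0 => simp [ccA]
        | 1 => simp [ccA]
        | k + 2 =>
          show ccA q θ n (k + 2) + _ = ccA q θ (n + 1) (k + 2)
          simp only [ccA, Nat.add_sub_cancel, Nat.add_eq_zero, and_false, ite_false,
            OfNat.ofNat_ne_zero, one_ne_zero]
          norm_num
          ring
      rw [hA, hC]
      simp only [mul_zero, zero_mul, add_zero, zero_add]
  -- coefficient facts
  have hcA : ∀ n, coeff ((D2 ^ n) 0 0) = fun k => if k ≤ n + 1 then (aaA K) n k else 0 := by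
    intro n
    rw [key n]
    show coeff (Ssum ι τ ((aaA K) n) (n + 1)) = _
    rw [Ssum_def]
    exact hcoeff (n + 1) ((aaA K) n)
  have hcD : ∀ n, coeff ((D2 ^ n) 1 1) = fun k => if k ≤ n + 1 then (aaA K) n k else 0 := by
    intro n
    rw [key n]
    show coeff (Ssum ι τ ((aaA K) n) (n + 1)) = _
    rw [Ssum_def]
    exact hcoeff (n + 1) ((aaA K) n)
  have hcC : ∀ n, coeff ((D2 ^ n) 1 0) = fun k => if k ≤ n + 1 then (ccA q θ) n k else 0 := by
    intro n
    rw [key n]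
    show coeff (Ssum ι τ ((ccA q θ) n) (n + 1)) = _
    rw [Ssum_def]
    exact hcoeff (n + 1) ((ccA q θ) n)
  have hc0 : ∀ k, coeff (0 : R) k = 0 := by
    have h := hcoeff 0 (fun _ => (0 : K))
    simp only [Finset.range_one, Finset.sum_singleton, map_zero, zero_mul,
      Finset.sum_const_zero] at h
    intro k
    rw [h]
    simp
  have hcB : ∀ n k, coeff ((D2 ^ n) 0 1) k = 0 := by
    intro n k
    rw [key n]
    show coeff (0 : R) k = 0
    exact hc0 k
  intro n hn
  refine ⟨∑ i ∈ Finset.range n, θ ^ q ^ i, ?_, ?_, ?_, ?_, ?_⟩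
  · -- nonzero
    intro hx0
    apply hθ
    refine ⟨∑ i ∈ Finset.range n, Polynomial.X ^ q ^ i, ?_, ?_⟩
    · intro hp
      have hco : (∑ i ∈ Finset.range n, (Polynomial.X : Polynomial Fq) ^ q ^ i).coeff
          (q ^ (n - 1)) = 1 := by
        rw [Polynomial.finset_sum_coeff]
        have : ∀ i ∈ Finset.range n,
            ((Polynomial.X : Polynomial Fq) ^ q ^ i).coeff (q ^ (n - 1)) =
              if i = n - 1 then 1 else 0 := by
          intro i hi
          rw [Polynomial.coeff_X_pow]
          congr 1
          simp only [eq_iff_iff]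
          constructor
          · intro h
            exact (Nat.pow_right_injective hq2 h.symm)
          · intro h; rw [h]
        rw [Finset.sum_congr rfl this, Finset.sum_ite_eq' _ (n - 1)]
        rw [if_pos (Finset.mem_range.2 (by omega))]
      rw [hp] at hco
      simp at hco
    · rw [map_sum]
      simp only [map_pow, Polynomial.aeval_X]
      exact hx0
  · -- membership
    exact Subalgebra.sum_mem _ fun i _ =>
      pow_mem (Algebra.self_mem_adjoin_singleton Fq θ) _
  · -- matrix equality
    have cA : coeff (Ssum ι τ ((aaA K) n) (n + 1)) = fun k => if k ≤ n + 1 then (aaA K) n k else 0 := by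
      rw [Ssum_def]; exact hcoeff (n + 1) ((aaA K) n)
    have cC : coeff (Ssum ι τ ((ccA q θ) n) (n + 1)) = fun k => if k ≤ n + 1 then (ccA q θ) n k else 0 := by
      rw [Ssum_def]; exact hcoeff (n + 1) ((ccA q θ) n)
    rw [key n]
    ext i j
    fin_cases i <;> fin_cases j <;>
        simp only [Fin.mk_zero, Fin.mk_one, Fin.isValue, Matrix.of_apply, Matrix.cons_val',
          Matrix.cons_val_zero, Matrix.cons_val_one, Matrix.head_cons, Matrix.empty_val',
          Matrix.cons_val_fin_one, Matrix.head_fin_const]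
    · rw [congrFun cA (n + 1)]
      simp [aaA, Nat.choose_succ_self]
    · exact hc0 (n + 1)
    · rw [congrFun cC (n + 1), if_pos (le_refl (n + 1)), ccA_lead]
    · rw [congrFun cA (n + 1)]
      simp [aaA, Nat.choose_succ_self]
  · -- vanishing
    intro k hk i j
    fin_cases i <;> fin_cases j
    · rw [show ((D2 ^ n) ⟨0, by omega⟩ ⟨0, by omega⟩ : R) = (D2 ^ n) 0 0 from rfl, hcA n]
      simp only []; rw [if_neg (by omega)]
    · rw [show ((D2 ^ n) ⟨0, by omega⟩ ⟨1, by omega⟩ : R) = (D2 ^ n) 0 1 from rfl]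
      exact hcB n k
    · rw [show ((D2 ^ n) ⟨1, by omega⟩ ⟨0, by omega⟩ : R) = (D2 ^ n) 1 0 from rfl, hcC n]
      simp only []; rw [if_neg (by omega)]
    · rw [show ((D2 ^ n) ⟨1, by omega⟩ ⟨1, by omega⟩ : R) = (D2 ^ n) 1 1 from rfl, hcD n]
      simp only []; rw [if_neg (by omega)]
  · -- not a unit
    intro hu
    have hdet := (Matrix.isUnit_iff_isUnit_det _).mp hu
    rw [Matrix.det_fin_two_of] at hdet
    simp at hdet
end

section
/- For every integer n ≥ 1, the t-module matrix D₂ⁿ (as above) is never of the form A₀ + A₁τ + ... + A_rτ^r with A_r ∈ GL₂(K); that is, the t-module defined by D₂ is not almost strictly pure. -/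
section Aux

variable {K R : Type*} [Field K] [Ring R]

lemma tw_pow (q : ℕ) (ι : K →+* R) (τ : R)
    (twist : ∀ a : K, τ * ι a = ι (a ^ q) * τ) :
    ∀ (k : ℕ) (a : K), τ ^ k * ι a = ι (a ^ q ^ k) * τ ^ k := by
  intro k
  induction k with
  | zero => intro a; simp
  | succ k ih =>
    intro a
    have : τ ^ (k + 1) * ι a = τ ^ k * (τ * ι a) := by
      rw [pow_succ, mul_assoc]
    rw [this, twist a, ← mul_assoc, ih (a ^ q)]
    rw [← pow_mul, mul_assoc, ← pow_succ]
    congr 2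
    rw [pow_succ']

lemma binom_pow (q : ℕ) (ι : K →+* R) (τ : R) (n : ℕ) :
    (1 + τ) ^ n = ∑ k ∈ Finset.range (n + 1), ι ((n.choose k : K)) * τ ^ k := by
  rw [add_comm, (Commute.one_right τ).add_pow]
  refine Finset.sum_congr rfl fun k _ => ?_
  rw [one_pow, mul_one, map_natCast, (Nat.cast_commute (n.choose k) (τ ^ k)).eq]

end Aux

/-- For every integer `n ≥ 1`, the matrix `D₂ ^ n` (with
`D₂ = I₂ + I₂·τ + [[0,0],[θ,0]]·τ² ∈ M₂(K{τ})`, `θ` transcendental over `F_q`)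
is never of the form `A₀ + A₁τ + ... + A_r τ^r` with `A_r ∈ GL₂(K)`; that is, the
`t`-module defined by `D₂` is not almost strictly pure. -/
theorem D2_not_almost_strictly_pure (q : ℕ) (Fq K R : Type*)
    [Field Fq] [Fintype Fq] (hcard : Fintype.card Fq = q)
    [Field K] [Algebra Fq K] [Ring R]
    (θ : K) (hθ : Transcendental Fq θ)
    (ι : K →+* R) (τ : R)
    (twist : ∀ a : K, τ * ι a = ι (a ^ q) * τ)
    (coeff : R → ℕ → K)
    (hrepr : ∀ x : R, ∃ N : ℕ,
      x = ∑ k ∈ Finset.range (N + 1), ι (coeff x k) * τ ^ k ∧ ∀ k > N, coeff x k = 0)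
    (hcoeff : ∀ (N : ℕ) (a : ℕ → K),
      coeff (∑ k ∈ Finset.range (N + 1), ι (a k) * τ ^ k)
        = fun k => if k ≤ N then a k else 0)
    (D2 : Matrix (Fin 2) (Fin 2) R)
    (hD2 : D2 = !![1 + τ, 0; ι θ * τ ^ 2, 1 + τ]) :
    ∀ n : ℕ, 1 ≤ n →
      ¬ ∃ (r : ℕ) (A : ℕ → Matrix (Fin 2) (Fin 2) K), IsUnit (A r) ∧
        D2 ^ n = ∑ k ∈ Finset.range (r + 1),
          (A k).map ι * (Matrix.diagonal fun _ => τ) ^ k := by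
  have hq : 2 ≤ q := hcard ▸ Fintype.one_lt_card
  -- the key structural computation of D2 ^ n
  have key : ∀ n : ℕ, ∃ c : ℕ → K,
      D2 ^ n = !![(1 + τ) ^ n, 0;
        ∑ k ∈ Finset.range (n + 2), ι (c k) * τ ^ k, (1 + τ) ^ n] ∧
      c (n + 1) = ∑ i ∈ Finset.range n, θ ^ q ^ i := by
    intro n
    induction n with
    | zero =>
      refine ⟨fun _ => 0, ?_, by simp⟩
      simp [Matrix.one_fin_two]
    | succ n ih =>
      obtain ⟨c, hXeq, hc⟩ := ih
      refine ⟨fun k => (if k ≤ n + 1 then c k else 0) + (if k = 0 then 0 else c (k - 1))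
        + (if 2 ≤ k then (n.choose (k - 2) : K) * θ ^ q ^ (k - 2) else 0), ?_, ?_⟩
      · rw [pow_succ, hXeq, hD2, Matrix.mul_fin_two]
        have e1 : (1 + τ) ^ n * (1 + τ) + 0 * (ι θ * τ ^ 2) = (1 + τ) ^ (n + 1) := by
          rw [zero_mul, add_zero, pow_succ]
        have e2 : (1 + τ) ^ n * 0 + 0 * (1 + τ) = (0 : R) := by simp
        have e4 : (∑ k ∈ Finset.range (n + 2), ι (c k) * τ ^ k) * 0
            + (1 + τ) ^ n * (1 + τ) = (1 + τ) ^ (n + 1) := by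
          rw [mul_zero, zero_add, pow_succ]
        have hP2 : (1 + τ) ^ n * (ι θ * τ ^ 2)
            = ∑ k ∈ Finset.range (n + 1), ι ((n.choose k : K) * θ ^ q ^ k) * τ ^ (k + 2) := by
          rw [binom_pow q ι τ n, Finset.sum_mul]
          refine Finset.sum_congr rfl fun k _ => ?_
          rw [map_mul, mul_assoc, ← mul_assoc (τ ^ k), tw_pow q ι τ twist k θ,
            mul_assoc, ← pow_add, ← mul_assoc]
        have S1 : ∑ k ∈ Finset.range (n + 3), ι (if k ≤ n + 1 then c k else 0) * τ ^ k
            = ∑ k ∈ Finset.range (n + 2), ι (c k) * τ ^ k := by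
          rw [Finset.sum_range_succ (fun k => ι (if k ≤ n + 1 then c k else 0) * τ ^ k) (n + 2)]
          rw [if_neg (by omega : ¬ n + 2 ≤ n + 1), map_zero, zero_mul, add_zero]
          exact Finset.sum_congr rfl fun k hk => by
            rw [if_pos (by simpa [Nat.lt_succ_iff] using Finset.mem_range.mp hk)]
        have S2 : ∑ k ∈ Finset.range (n + 3), ι (if k = 0 then 0 else c (k - 1)) * τ ^ k
            = (∑ k ∈ Finset.range (n + 2), ι (c k) * τ ^ k) * τ := by
          rw [Finset.sum_range_succ' (fun k => ι (if k = 0 then 0 else c (k - 1)) * τ ^ k)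
            (n + 2), Finset.sum_mul]
          have h0 : ι (if (0:ℕ) = 0 then (0:K) else c (0 - 1)) * τ ^ 0 = 0 := by simp
          rw [h0, add_zero]
          refine Finset.sum_congr rfl fun k _ => ?_
          rw [if_neg (Nat.succ_ne_zero k), Nat.add_sub_cancel, pow_succ, mul_assoc]
        have S3 : ∑ k ∈ Finset.range (n + 3),
              ι (if 2 ≤ k then (n.choose (k - 2) : K) * θ ^ q ^ (k - 2) else 0) * τ ^ k
            = ∑ k ∈ Finset.range (n + 1), ι ((n.choose k : K) * θ ^ q ^ k) * τ ^ (k + 2) := by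
          rw [Finset.sum_range_succ' _ (n + 2), Finset.sum_range_succ' _ (n + 1)]
          rw [if_neg (by omega : ¬ (2:ℕ) ≤ 0 + 1), if_neg (by omega : ¬ (2:ℕ) ≤ 0), map_zero,
            zero_mul, zero_mul, add_zero, add_zero]
          refine Finset.sum_congr rfl fun k _ => ?_
          rw [if_pos (by omega : (2:ℕ) ≤ k + 1 + 1), show k + 1 + 1 - 2 = k from by omega,
            show k + 1 + 1 = k + 2 from by omega]
        have e3 : (∑ k ∈ Finset.range (n + 2), ι (c k) * τ ^ k) * (1 + τ)
            + (1 + τ) ^ n * (ι θ * τ ^ 2)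
            = ∑ k ∈ Finset.range (n + 3),
                ι ((if k ≤ n + 1 then c k else 0) + (if k = 0 then 0 else c (k - 1))
                  + (if 2 ≤ k then (n.choose (k - 2) : K) * θ ^ q ^ (k - 2) else 0)) * τ ^ k := by
          simp only [map_add, add_mul, Finset.sum_add_distrib]
          rw [S1, S2, S3, hP2, mul_add, mul_one]
        rw [e1, e2, e3, e4]
      · have h1 : ¬ (n + 2 ≤ n + 1) := by omega
        have h2 : ¬ (n + 2 = 0) := by omega
        have h3 : (2 : ℕ) ≤ n + 2 := by omega
        have h4 : n + 1 + 1 - 2 = n := by omega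
        have h5 : n + 1 + 1 - 1 = n + 1 := by omega
        simp only [if_neg h1, if_neg h2, if_pos h3, zero_add, h4, h5,
          Nat.choose_self, Nat.cast_one, one_mul, hc, Finset.sum_range_succ]
  -- nonvanishing of the leading coefficient
  have hsum_ne : ∀ n : ℕ, 1 ≤ n → (∑ i ∈ Finset.range n, θ ^ q ^ i) ≠ 0 := by
    intro n hn h0
    set p : Polynomial Fq := ∑ i ∈ Finset.range n, Polynomial.X ^ q ^ i with hp_def
    have hev : Polynomial.aeval θ p = ∑ i ∈ Finset.range n, θ ^ q ^ i := by
      simp [hp_def]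
    have hp : p ≠ 0 := by
      intro hp0
      have hco : p.coeff 1 = 1 := by
        rw [hp_def, Polynomial.finset_sum_coeff]
        have : ∀ i ∈ Finset.range n, (Polynomial.X ^ q ^ i : Polynomial Fq).coeff 1
            = if i = 0 then 1 else 0 := by
          intro i _
          rw [Polynomial.coeff_X_pow]
          by_cases hi : i = 0
          · subst hi; simp
          · rw [if_neg hi, if_neg]
            have : 1 < q ^ i := Nat.one_lt_pow hi hq
            omega
        rw [Finset.sum_congr rfl this, Finset.sum_ite_eq' (Finset.range n) 0 (fun _ => 1),
          if_pos (Finset.mem_range.mpr (by omega))]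
      rw [hp0] at hco
      simp at hco
    exact hθ ⟨p, hp, hev.trans h0⟩
  -- main argument
  rintro n hn ⟨r, A, hAunit, hA⟩
  obtain ⟨c, hM, hc⟩ := key n
  -- coefficients from the A-representation
  have hent : ∀ i j, (D2 ^ n) i j = ∑ k ∈ Finset.range (r + 1), ι (A k i j) * τ ^ k := by
    intro i j
    rw [hA, Matrix.sum_apply]
    refine Finset.sum_congr rfl fun k _ => ?_
    rw [Matrix.diagonal_pow, Matrix.mul_diagonal, Matrix.map_apply, Pi.pow_apply]
  have hAc : ∀ i j, coeff ((D2 ^ n) i j) = fun k => if k ≤ r then A k i j else 0 := by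
    intro i j
    rw [hent i j]
    exact hcoeff r (fun k => A k i j)
  -- entries of D2 ^ n from the structural form
  have h00 : (D2 ^ n) 0 0 = (1 + τ) ^ n := by rw [hM]; simp
  have h01 : (D2 ^ n) 0 1 = 0 := by rw [hM]; simp
  have h10 : (D2 ^ n) 1 0 = ∑ k ∈ Finset.range (n + 2), ι (c k) * τ ^ k := by rw [hM]; simp
  -- coeff of entry (1,0) at n+1 is nonzero, forcing n+1 ≤ r
  have hcX : coeff ((D2 ^ n) 1 0) (n + 1) = c (n + 1) := by
    rw [h10, hcoeff (n + 1) c]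
    simp
  have hcne : c (n + 1) ≠ 0 := by rw [hc]; exact hsum_ne n hn
  have hrge : n + 1 ≤ r := by
    by_contra hlt
    have := congrFun (hAc 1 0) (n + 1)
    rw [hcX, if_neg (by omega)] at this
    exact hcne this
  -- the top row of A r vanishes
  have hA00 : A r 0 0 = 0 := by
    have h1 := congrFun (hAc 0 0) r
    rw [if_pos le_rfl] at h1
    rw [← h1, h00, binom_pow q ι τ n, hcoeff n (fun k => (n.choose k : K))]
    simp only [if_neg (by omega : ¬ r ≤ n)]
  have hA01 : A r 0 1 = 0 := by
    have h1 := congrFun (hAc 0 1) r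
    rw [if_pos le_rfl] at h1
    have hz : coeff (0 : R) r = 0 := by
      have h2 := hcoeff 0 (fun _ => 0)
      simp only [map_zero, zero_mul, Finset.sum_const_zero] at h2
      rw [h2]
      simp
    rw [← h1, h01, hz]
  -- contradiction with invertibility
  have hdet : (A r).det = 0 := by
    rw [Matrix.det_fin_two, hA00, hA01]
    ring
  have := (Matrix.isUnit_iff_isUnit_det (A r)).mp hAunit
  rw [hdet] at this
  exact zero_ne_one (isUnit_zero_iff.mp this)
end

section
/- Over K({σ})[t], the matrix t·I₂ − D₂, where D₂ = I₂ + I₂τ + [[0,0],[θ,0]]τ², can be transformed by elementary row and column operations into the diagonal matrix diag(1, λ₂), where λ₂ = (t − τ − 1)(−σ²θ^{-1})(t − τ − 1). Equivalently, there exist invertible matrices P, Q ∈ GL₂(K({σ})[t]) with P·(tI₂ − D₂)·Q = diag(1, λ₂). -/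
open Polynomial

/-- Over `K({σ})[t]`, the matrix `t·I₂ − D₂`, where
`D₂ = I₂ + I₂τ + [[0,0],[θ,0]]τ²`, can be transformed by elementary row and column
operations into the diagonal matrix `diag(1, λ₂)`, where
`λ₂ = (t − τ − 1)(−σ²θ⁻¹)(t − τ − 1)`.  Equivalently, there exist invertible matrices
`P, Q ∈ GL₂(K({σ})[t])` with `P·(tI₂ − D₂)·Q = diag(1, λ₂)`. -/
theorem tI_sub_D2_diagonalization (q : ℕ) (Fq K F : Type*)
    [Field Fq] [Fintype Fq] (hcard : Fintype.card Fq = q)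
    [Field K] [PerfectField K] [Algebra Fq K] [DivisionRing F]
    (ι : K →+* F) (σ τ : F) (hσ : σ ≠ 0) (hτ : τ = σ⁻¹)
    (twist : ∀ a : K, σ * ι (a ^ q) = ι a * σ)
    (θ : K) (hθ : θ ≠ 0) :
    ∃ P Q : Matrix (Fin 2) (Fin 2) (Polynomial F), IsUnit P ∧ IsUnit Q ∧
      P * !![X - C τ - 1, 0; -(C (ι θ * τ ^ 2)), X - C τ - 1] * Q
        = Matrix.diagonal
            ![1, (X - C τ - 1) * C (-(σ ^ 2 * (ι θ)⁻¹)) * (X - C τ - 1)] := by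
  set a : Polynomial F := X - C τ - 1 with ha
  set u : Polynomial F := C (ι θ * τ ^ 2) with hu
  set d : Polynomial F := C (σ ^ 2 * (ι θ)⁻¹) with hd
  have hιθ : ι θ ≠ 0 := fun h => hθ (ι.injective (by simp [h]))
  have hτσ : τ * σ = 1 := by rw [hτ]; exact inv_mul_cancel₀ hσ
  have hστ : σ * τ = 1 := by rw [hτ]; exact mul_inv_cancel₀ hσ
  have hτ2σ2 : τ ^ 2 * σ ^ 2 = 1 := by
    have : τ * (τ * σ) * σ = 1 := by rw [hτσ]; rw [mul_one, hτσ]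
    calc τ ^ 2 * σ ^ 2 = τ * (τ * σ) * σ := by ring_nf; rw [pow_two, pow_two]; noncomm_ring
    _ = 1 := this
  have hσ2τ2 : σ ^ 2 * τ ^ 2 = 1 := by
    have : σ * (σ * τ) * τ = 1 := by rw [hστ, mul_one, hστ]
    calc σ ^ 2 * τ ^ 2 = σ * (σ * τ) * τ := by rw [pow_two, pow_two]; noncomm_ring
    _ = 1 := this
  have hud : u * d = 1 := by
    rw [hu, hd, ← C_mul, ← C_1]
    congr 1
    calc ι θ * τ ^ 2 * (σ ^ 2 * (ι θ)⁻¹) = ι θ * (τ ^ 2 * σ ^ 2) * (ι θ)⁻¹ := by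
          noncomm_ring
      _ = 1 := by rw [hτ2σ2, mul_one, mul_inv_cancel₀ hιθ]
  have hdu : d * u = 1 := by
    rw [hu, hd, ← C_mul, ← C_1]
    congr 1
    calc σ ^ 2 * (ι θ)⁻¹ * (ι θ * τ ^ 2) = σ ^ 2 * ((ι θ)⁻¹ * ι θ) * τ ^ 2 := by
          noncomm_ring
      _ = 1 := by rw [inv_mul_cancel₀ hιθ, mul_one, hσ2τ2]
  refine ⟨!![0, -d; 1, a * d], !![1, -(d * a); 0, -1], ?_, ?_, ?_⟩
  · refine ⟨⟨_, !![a, 1; -u, 0], ?_, ?_⟩, rfl⟩ <;>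
    · ext i j
      fin_cases i <;> fin_cases j <;>
        simp [Matrix.mul_apply, Fin.sum_univ_two, Matrix.one_apply, mul_assoc, hdu, hud]
  · refine ⟨⟨_, !![1, -(d * a); 0, -1], ?_, ?_⟩, rfl⟩ <;>
    · ext i j
      fin_cases i <;> fin_cases j <;>
        simp [Matrix.mul_apply, Fin.sum_univ_two, Matrix.one_apply]
  · have hCd : C (-(σ ^ 2 * (ι θ)⁻¹)) = -d := by rw [hd, map_neg]
    rw [hCd]
    ext i j
    fin_cases i <;> fin_cases j <;>
      simp [Matrix.mul_apply, Fin.sum_univ_two, Matrix.diagonal, mul_assoc, hdu, hud] <;>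
      noncomm_ring [hdu, hud]
end

section
/- For every integer d ≥ 2, the block-diagonal matrix D_d = diag(D₂, θ+τ, ..., θ+τ) ∈ M_d(K{τ}) (with d−2 copies of θ+τ) has the property that for every n ≥ 1, the leading τ-coefficient of D_dⁿ equals the block matrix diag(A_{n+1,n}, 0_{d−2}) where A_{n+1,n} = [[0,0],[x_{n+1,n},0]] with x_{n+1,n} ≠ 0; in particular this leading coefficient is a nonzero nilpotent matrix and D_d defines a t-module that is not almost strictly pure. -/
/-- Auxiliary sequence: the lower-left entry of the `n`-th power of the
lower-triangular matrix `[[u,0],[v,u]]`. -/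
def Sseq {R : Type*} [Ring R] (u v : R) : ℕ → R
  | 0 => 0
  | n + 1 => Sseq u v n * u + u ^ n * v

/-- For every integer `d ≥ 2`, the block-diagonal matrix
`D_d = diag(D₂, θ+τ, ..., θ+τ) ∈ M_d(K{τ})` (with `d−2` copies of the Carlitz matrix
`θ+τ`, where `D₂ = I₂ + I₂τ + [[0,0],[θ,0]]τ²`) has the property that for every
`n ≥ 1` the leading `τ`-coefficient of `D_d ^ n` equals the block matrix
`diag(A_{n+1,n}, 0_{d−2})` where `A_{n+1,n} = [[0,0],[x_{n+1,n},0]]` with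
`x_{n+1,n} ≠ 0`; in particular this leading coefficient is a nonzero nilpotent matrix
and `D_d` defines a `t`-module that is not almost strictly pure. -/
theorem Dd_not_almost_strictly_pure (q : ℕ) (Fq K R : Type*)
    [Field Fq] [Fintype Fq] (hcard : Fintype.card Fq = q)
    [Field K] [Algebra Fq K] [Ring R]
    (θ : K) (hθ : Transcendental Fq θ)
    (ι : K →+* R) (τ : R)
    (twist : ∀ a : K, τ * ι a = ι (a ^ q) * τ)
    (coeff : R → ℕ → K)
    (hrepr : ∀ x : R, ∃ N : ℕ,
      x = ∑ k ∈ Finset.range (N + 1), ι (coeff x k) * τ ^ k ∧ ∀ k > N, coeff x k = 0)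
    (hcoeff : ∀ (N : ℕ) (a : ℕ → K),
      coeff (∑ k ∈ Finset.range (N + 1), ι (a k) * τ ^ k)
        = fun k => if k ≤ N then a k else 0)
    (d : ℕ) (hd : 2 ≤ d)
    (Dd : Matrix (Fin d) (Fin d) R)
    (hDd : ∀ i j : Fin d, Dd i j =
      if (i : ℕ) = 0 ∧ (j : ℕ) = 0 then 1 + τ
      else if (i : ℕ) = 1 ∧ (j : ℕ) = 1 then 1 + τ
      else if (i : ℕ) = 1 ∧ (j : ℕ) = 0 then ι θ * τ ^ 2
      else if i = j then ι θ + τ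
      else 0) :
    (∀ n : ℕ, 1 ≤ n → ∃ x : K, x ≠ 0 ∧
      (∀ i j : Fin d, coeff ((Dd ^ n) i j) (n + 1)
        = if (i : ℕ) = 1 ∧ (j : ℕ) = 0 then x else 0) ∧
      (∀ k, n + 1 < k → ∀ i j, coeff ((Dd ^ n) i j) k = 0) ∧
      (Matrix.of fun i j => coeff ((Dd ^ n) i j) (n + 1)) ≠ 0 ∧
      IsNilpotent (Matrix.of fun i j => coeff ((Dd ^ n) i j) (n + 1))) ∧
    ¬ ∃ s : ℕ, 1 ≤ s ∧ ∃ (r : ℕ) (A : ℕ → Matrix (Fin d) (Fin d) K), IsUnit (A r) ∧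
      Dd ^ s = ∑ k ∈ Finset.range (r + 1),
        (A k).map ι * (Matrix.diagonal fun _ => τ) ^ k := by
  -- basic objects
  set u : R := 1 + τ with hu_def
  set v : R := ι θ * τ ^ 2 with hv_def
  set w : R := ι θ + τ with hw_def
  have hq : 2 ≤ q := by
    rw [← hcard]; exact Fintype.one_lt_card
  -- iterated twist
  have tw : ∀ (m : ℕ) (a : K), τ ^ m * ι a = ι (a ^ q ^ m) * τ ^ m := by
    intro m
    induction m with
    | zero => intro a; simp
    | succ m ih =>
        intro a
        rw [pow_succ, mul_assoc, twist a, ← mul_assoc, ih (a ^ q), ← pow_mul,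
          ← mul_assoc, ← pow_succ']
  -- representation utilities
  have rep_pad : ∀ (x : R) (n : ℕ) (c : ℕ → K), (∀ k, n < k → c k = 0) →
      x = ∑ k ∈ Finset.range (n + 1), ι (c k) * τ ^ k →
      ∀ N, n ≤ N → x = ∑ k ∈ Finset.range (N + 1), ι (c k) * τ ^ k := by
    intro x n c hc hx N hN
    induction N with
    | zero => simpa [Nat.le_zero.mp hN] using hx
    | succ N ih =>
        rcases Nat.lt_or_ge n (N + 1) with h | h
        · rw [Finset.sum_range_succ, hc (N + 1) (by omega), map_zero, zero_mul, add_zero]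
          exact ih (by omega)
        · simpa [Nat.le_antisymm hN h] using hx
  have rep_shift : ∀ (x : R) (n : ℕ) (c : ℕ → K),
      x = ∑ k ∈ Finset.range (n + 1), ι (c k) * τ ^ k →
      x * τ = ∑ k ∈ Finset.range (n + 2), ι (if k = 0 then 0 else c (k - 1)) * τ ^ k := by
    intro x n c hx
    rw [Finset.sum_range_succ' (fun k => ι (if k = 0 then 0 else c (k - 1)) * τ ^ k) (n + 1)]
    simp only [Nat.succ_ne_zero, if_false, Nat.add_sub_cancel, if_true, eq_self_iff_true,
      map_zero, zero_mul, add_zero]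
    rw [hx, Finset.sum_mul]
    refine Finset.sum_congr rfl fun k _ => ?_
    rw [mul_assoc, ← pow_succ]
  have rep_scale : ∀ (x : R) (n : ℕ) (c : ℕ → K) (t : K),
      x = ∑ k ∈ Finset.range (n + 1), ι (c k) * τ ^ k →
      x * ι t = ∑ k ∈ Finset.range (n + 1), ι (c k * t ^ q ^ k) * τ ^ k := by
    intro x n c t hx
    rw [hx, Finset.sum_mul]
    refine Finset.sum_congr rfl fun k _ => ?_
    rw [mul_assoc, tw k t, ← mul_assoc, ← map_mul]
  -- expansion of u ^ n
  have hu : ∀ n : ℕ, u ^ n = ∑ k ∈ Finset.range (n + 1), ι ((n.choose k : K)) * τ ^ k := by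
    intro n
    have h1 : u = τ + 1 := by rw [hu_def, add_comm]
    rw [h1, (Commute.one_right τ).add_pow n]
    refine Finset.sum_congr rfl fun k _ => ?_
    rw [one_pow, mul_one, map_natCast, (Nat.cast_commute (n.choose k) (τ ^ k)).eq]
  -- expansions of w ^ n and Sseq u v n
  have hws : ∀ n : ℕ, ∃ b s : ℕ → K,
      (∀ k, n < k → b k = 0) ∧ (∀ k, n + 1 < k → s k = 0) ∧
      s (n + 1) = ∑ i ∈ Finset.range n, θ ^ q ^ i ∧
      w ^ n = ∑ k ∈ Finset.range (n + 1), ι (b k) * τ ^ k ∧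
      Sseq u v n = ∑ k ∈ Finset.range (n + 2), ι (s k) * τ ^ k := by
    intro n
    induction n with
    | zero =>
        refine ⟨fun k => if k = 0 then 1 else 0, fun _ => 0, ?_, ?_, ?_, ?_, ?_⟩
        · intro k hk
          show (if k = 0 then (1:K) else 0) = 0
          rw [if_neg (by omega)]
        · intro k _; rfl
        · simp
        · simp
        · simp [Sseq]
    | succ n ih =>
        obtain ⟨b, s, hb0, hs0, hstop, hbw, hsS⟩ := ih
        refine ⟨fun k => b k * θ ^ q ^ k + if k = 0 then 0 else b (k - 1),
          fun k => (s k + if k = 0 then 0 else s (k - 1)) +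
            (if k = 0 then 0 else if k - 1 = 0 then 0
              else (n.choose (k - 1 - 1) : K) * θ ^ q ^ (k - 1 - 1)), ?_, ?_, ?_, ?_, ?_⟩
        · intro k hk
          have h1 : b k = 0 := hb0 k (by omega)
          have h2 : b (k - 1) = 0 := hb0 (k - 1) (by omega)
          show b k * θ ^ q ^ k + (if k = 0 then 0 else b (k - 1)) = 0
          rw [if_neg (by omega : ¬ k = 0), h1, h2, zero_mul, add_zero]
        · intro k hk
          have h1 : s k = 0 := hs0 k (by omega)
          have h2 : s (k - 1) = 0 := hs0 (k - 1) (by omega)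
          have h3 : n.choose (k - 1 - 1) = 0 := Nat.choose_eq_zero_of_lt (by omega)
          show (s k + if k = 0 then 0 else s (k - 1)) +
            (if k = 0 then 0 else if k - 1 = 0 then 0
              else (n.choose (k - 1 - 1) : K) * θ ^ q ^ (k - 1 - 1)) = 0
          rw [if_neg (by omega : ¬ k = 0), if_neg (by omega : ¬ k = 0),
            if_neg (by omega : ¬ k - 1 = 0), h1, h2, h3, Nat.cast_zero, zero_mul,
            add_zero, add_zero]
        · have h1 : s (n + 1 + 1) = 0 := hs0 (n + 1 + 1) (by omega)
          show (s (n + 1 + 1) + if n + 1 + 1 = 0 then 0 else s (n + 1 + 1 - 1)) +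
            (if n + 1 + 1 = 0 then 0 else if n + 1 + 1 - 1 = 0 then 0
              else (n.choose (n + 1 + 1 - 1 - 1) : K) * θ ^ q ^ (n + 1 + 1 - 1 - 1))
            = ∑ i ∈ Finset.range (n + 1), θ ^ q ^ i
          rw [if_neg (by omega : ¬ n + 1 + 1 = 0), if_neg (by omega : ¬ n + 1 + 1 = 0),
            if_neg (by omega : ¬ n + 1 + 1 - 1 = 0), h1, zero_add,
            show n + 1 + 1 - 1 = n + 1 from rfl, show n + 1 - 1 = n from rfl,
            hstop, Nat.choose_self, Nat.cast_one, one_mul, Finset.sum_range_succ]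
        · -- w ^ (n+1) = w ^ n * ι θ + w ^ n * τ
          have hmul : w ^ (n + 1) = w ^ n * ι θ + w ^ n * τ := by
            rw [pow_succ, hw_def, mul_add]
          have hA : w ^ n * ι θ
              = ∑ k ∈ Finset.range (n + 1 + 1), ι (b k * θ ^ q ^ k) * τ ^ k :=
            rep_pad _ n _ (fun k hk => by
                show b k * θ ^ q ^ k = 0
                rw [hb0 k hk, zero_mul])
              (rep_scale _ n b θ hbw) (n + 1) (by omega)
          have hB : w ^ n * τ
              = ∑ k ∈ Finset.range (n + 1 + 1), ι (if k = 0 then 0 else b (k - 1)) * τ ^ k :=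
            rep_shift _ n b hbw
          rw [hmul, hA, hB, ← Finset.sum_add_distrib]
          refine Finset.sum_congr rfl fun k _ => ?_
          rw [← add_mul, ← map_add]
        · -- Sseq (n+1) = (Sseq n + Sseq n * τ) + ((u^n * ι θ) * τ) * τ
          have hmul : Sseq u v (n + 1) =
              (Sseq u v n + Sseq u v n * τ) + ((u ^ n * ι θ) * τ) * τ := by
            show Sseq u v n * u + u ^ n * v = _
            rw [hu_def, hv_def, mul_add, mul_one, pow_two]
            simp only [mul_assoc]
          have hA : Sseq u v n = ∑ k ∈ Finset.range (n + 1 + 2), ι (s k) * τ ^ k :=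
            rep_pad _ (n + 1) s hs0 hsS (n + 2) (by omega)
          have hB : Sseq u v n * τ
              = ∑ k ∈ Finset.range (n + 1 + 2), ι (if k = 0 then 0 else s (k - 1)) * τ ^ k :=
            rep_shift _ (n + 1) s hsS
          have hC1 : u ^ n * ι θ
              = ∑ k ∈ Finset.range (n + 1), ι ((n.choose k : K) * θ ^ q ^ k) * τ ^ k :=
            rep_scale _ n _ θ (hu n)
          have hC2 : (u ^ n * ι θ) * τ = ∑ k ∈ Finset.range (n + 2),
              ι (if k = 0 then 0 else (n.choose (k - 1) : K) * θ ^ q ^ (k - 1)) * τ ^ k :=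
            rep_shift _ n _ hC1
          have hC : ((u ^ n * ι θ) * τ) * τ = ∑ k ∈ Finset.range (n + 1 + 2),
              ι (if k = 0 then 0 else if k - 1 = 0 then 0
                else (n.choose (k - 1 - 1) : K) * θ ^ q ^ (k - 1 - 1)) * τ ^ k :=
            rep_shift _ (n + 1) _ hC2
          rw [hmul, hB, hC, hA, ← Finset.sum_add_distrib, ← Finset.sum_add_distrib]
          refine Finset.sum_congr rfl fun k _ => ?_
          rw [← add_mul, ← add_mul, ← map_add, ← map_add]
  -- distinguished indices
  obtain ⟨i0, hi0⟩ : ∃ i : Fin d, (i : ℕ) = 0 := ⟨⟨0, by omega⟩, rfl⟩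
  obtain ⟨i1, hi1⟩ : ∃ i : Fin d, (i : ℕ) = 1 := ⟨⟨1, by omega⟩, rfl⟩
  -- entries of Dd ^ n
  have hpow : ∀ n : ℕ, ∀ i j : Fin d, (Dd ^ n) i j =
      if (i : ℕ) = 0 ∧ (j : ℕ) = 0 then u ^ n
      else if (i : ℕ) = 1 ∧ (j : ℕ) = 1 then u ^ n
      else if (i : ℕ) = 1 ∧ (j : ℕ) = 0 then Sseq u v n
      else if i = j then w ^ n
      else 0 := by
    intro n
    induction n with
    | zero =>
        intro i j
        rw [pow_zero, Matrix.one_apply, pow_zero, pow_zero,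
          show Sseq u v 0 = 0 from rfl]
        by_cases hij : i = j
        · have hv : (i : ℕ) = (j : ℕ) := by rw [hij]
          rw [if_pos hij]
          split_ifs with h1 h2 h3 h4 <;>
            first | rfl | omega | exact absurd hij h4
        · have hv : (i : ℕ) ≠ (j : ℕ) := fun h => hij (Fin.ext h)
          rw [if_neg hij]
          split_ifs with h1 h2 h3 h4 <;>
            first | rfl | omega | exact absurd h4 hij
    | succ n ih =>
        intro i j
        rw [pow_succ, Matrix.mul_apply]
        rcases show (i : ℕ) = 0 ∨ (i : ℕ) = 1 ∨ 2 ≤ (i : ℕ) by omega with hi | hi | hi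
        · -- first row
          have hrow : ∀ m : Fin d, (Dd ^ n) i m * Dd m j
              = if m = i0 then u ^ n * Dd m j else 0 := by
            intro m
            by_cases hm : m = i0
            · rw [if_pos hm, ih i m, if_pos ⟨hi, by rw [hm, hi0]⟩]
            · have hm0 : (m : ℕ) ≠ 0 := fun h => hm (Fin.ext (by rw [h, hi0]))
              rw [if_neg hm, ih i m, if_neg (fun h => hm0 h.2),
                if_neg (by rintro ⟨h, -⟩; omega), if_neg (by rintro ⟨h, -⟩; omega),
                if_neg (fun h => hm0 (by rw [← h, hi])), zero_mul]
          rw [show (∑ m : Fin d, (Dd ^ n) i m * Dd m j)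
              = ∑ m : Fin d, if m = i0 then u ^ n * Dd m j else 0 from
              Finset.sum_congr rfl fun m _ => hrow m,
            Finset.sum_ite_eq' Finset.univ i0 (fun m => u ^ n * Dd m j),
            if_pos (Finset.mem_univ i0), hDd i0 j]
          by_cases hj : (j : ℕ) = 0
          · rw [if_pos ⟨hi0, hj⟩, if_pos ⟨hi, hj⟩, ← pow_succ]
          · rw [if_neg (fun h => hj h.2), if_neg (by rintro ⟨h, -⟩; rw [hi0] at h; omega),
              if_neg (fun h => hj h.2), if_neg (fun h => hj (by rw [← h, hi0])), mul_zero,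
              if_neg (fun h => hj h.2), if_neg (by rintro ⟨h, -⟩; omega),
              if_neg (fun h => hj h.2), if_neg (fun h => hj (by rw [← h, hi]))]
        · -- second row
          have hrow : ∀ m : Fin d, (Dd ^ n) i m * Dd m j
              = (if m = i1 then u ^ n * Dd m j else 0)
                + (if m = i0 then Sseq u v n * Dd m j else 0) := by
            intro m
            by_cases hm1 : m = i1
            · have hm0 : ¬ (m = i0) := fun h => by rw [hm1] at h; rw [h] at hi1; omega
              rw [if_pos hm1, if_neg hm0, add_zero, ih i m,
                if_neg (by rintro ⟨h, -⟩; omega), if_pos ⟨hi, by rw [hm1, hi1]⟩]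
            · by_cases hm0 : m = i0
              · rw [if_neg hm1, if_pos hm0, zero_add, ih i m,
                  if_neg (by rintro ⟨h, -⟩; omega),
                  if_neg (by rintro ⟨-, h⟩; exact hm1 (Fin.ext (by rw [h, hi1]))),
                  if_pos ⟨hi, by rw [hm0, hi0]⟩]
              · have h0 : (m : ℕ) ≠ 0 := fun h => hm0 (Fin.ext (by rw [h, hi0]))
                have h1 : (m : ℕ) ≠ 1 := fun h => hm1 (Fin.ext (by rw [h, hi1]))
                rw [if_neg hm1, if_neg hm0, add_zero, ih i m,
                  if_neg (by rintro ⟨h, -⟩; omega), if_neg (fun h => h1 h.2),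
                  if_neg (fun h => h0 h.2), if_neg (fun h => h1 (by rw [← h, hi])), zero_mul]
          rw [show (∑ m : Fin d, (Dd ^ n) i m * Dd m j)
              = ∑ m : Fin d, ((if m = i1 then u ^ n * Dd m j else 0)
                + (if m = i0 then Sseq u v n * Dd m j else 0)) from
              Finset.sum_congr rfl fun m _ => hrow m,
            Finset.sum_add_distrib,
            Finset.sum_ite_eq' Finset.univ i1 (fun m => u ^ n * Dd m j),
            Finset.sum_ite_eq' Finset.univ i0 (fun m => Sseq u v n * Dd m j),
            if_pos (Finset.mem_univ i1), if_pos (Finset.mem_univ i0), hDd i1 j, hDd i0 j]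
          rcases show (j : ℕ) = 0 ∨ (j : ℕ) = 1 ∨ 2 ≤ (j : ℕ) by omega with hj | hj | hj
          · rw [if_neg (by rintro ⟨h, -⟩; rw [hi1] at h; omega),
              if_neg (by rintro ⟨-, h⟩; omega), if_pos ⟨hi1, hj⟩,
              if_pos ⟨hi0, hj⟩, if_neg (by rintro ⟨h, -⟩; omega),
              if_neg (by rintro ⟨-, h⟩; omega), if_pos ⟨hi, hj⟩]
            show u ^ n * v + Sseq u v n * u = Sseq u v (n + 1)
            rw [add_comm]; rfl
          · simp [Fin.ext_iff, hi0, hi1, hi, hj, pow_succ]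
          · have hj0 : ¬ (j : ℕ) = 0 := by omega
            have hj1 : ¬ (j : ℕ) = 1 := by omega
            have hj0' : ¬ (0 : ℕ) = (j : ℕ) := by omega
            have hj1' : ¬ (1 : ℕ) = (j : ℕ) := by omega
            simp [Fin.ext_iff, hi0, hi1, hi, hj0, hj1, hj0', hj1']
        · -- rows below the block
          have hrow : ∀ m : Fin d, (Dd ^ n) i m * Dd m j
              = if m = i then w ^ n * Dd m j else 0 := by
            intro m
            by_cases hm : m = i
            · rw [if_pos hm, ih i m, if_neg (by rintro ⟨h, -⟩; omega),
                if_neg (by rintro ⟨h, -⟩; omega), if_neg (by rintro ⟨h, -⟩; omega),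
                if_pos hm.symm]
            · rw [if_neg hm, ih i m, if_neg (by rintro ⟨h, -⟩; omega),
                if_neg (by rintro ⟨h, -⟩; omega), if_neg (by rintro ⟨h, -⟩; omega),
                if_neg (fun h => hm h.symm), zero_mul]
          rw [show (∑ m : Fin d, (Dd ^ n) i m * Dd m j)
              = ∑ m : Fin d, if m = i then w ^ n * Dd m j else 0 from
              Finset.sum_congr rfl fun m _ => hrow m,
            Finset.sum_ite_eq' Finset.univ i (fun m => w ^ n * Dd m j),
            if_pos (Finset.mem_univ i), hDd i j]
          have hi0' : ¬ (i : ℕ) = 0 := by omega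
          have hi1' : ¬ (i : ℕ) = 1 := by omega
          simp only [hi0', hi1', false_and, if_false]
          by_cases hj : i = j
          · rw [if_pos hj, if_pos hj, ← pow_succ]
          · rw [if_neg hj, if_neg hj, mul_zero]
  -- Part 1
  have main : ∀ n : ℕ, 1 ≤ n → ∃ x : K, x ≠ 0 ∧
      (∀ i j : Fin d, coeff ((Dd ^ n) i j) (n + 1)
        = if (i : ℕ) = 1 ∧ (j : ℕ) = 0 then x else 0) ∧
      (∀ k, n + 1 < k → ∀ i j, coeff ((Dd ^ n) i j) k = 0) ∧
      (Matrix.of fun i j => coeff ((Dd ^ n) i j) (n + 1)) ≠ 0 ∧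
      IsNilpotent (Matrix.of fun i j => coeff ((Dd ^ n) i j) (n + 1)) := by
    intro n hn
    obtain ⟨b, s, hb0, hs0, hstop, hbw, hsS⟩ := hws n
    have hx0 : (∑ i ∈ Finset.range n, θ ^ q ^ i) ≠ 0 := by
      intro hx
      apply hθ
      refine ⟨∑ i ∈ Finset.range n, Polynomial.X ^ q ^ i, ?_, ?_⟩
      · intro hp
        have hc := congrArg (fun p => Polynomial.coeff p (q ^ (n - 1))) hp
        simp only [Polynomial.finset_sum_coeff, Polynomial.coeff_X_pow,
          Polynomial.coeff_zero] at hc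
        rw [Finset.sum_congr rfl (fun i _ => show
            (if q ^ (n - 1) = q ^ i then (1 : Fq) else 0) = if i = n - 1 then 1 else 0 by
          by_cases h : i = n - 1
          · rw [if_pos h, if_pos (by rw [h])]
          · exact if_neg (fun h' => h (Nat.pow_right_injective hq h').symm) |>.trans
              (if_neg h).symm),
          Finset.sum_ite_eq' (Finset.range n) (n - 1) (fun _ => (1 : Fq)),
          if_pos (Finset.mem_range.mpr (by omega))] at hc
        exact one_ne_zero hc
      · rw [map_sum, ← hx]
        exact Finset.sum_congr rfl fun i _ => by
          rw [map_pow, Polynomial.aeval_X]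
    refine ⟨∑ i ∈ Finset.range n, θ ^ q ^ i, hx0, ?_⟩
    -- coefficient description of the entries
    have hcof : ∀ i j : Fin d, ∃ c : ℕ → K,
        (coeff ((Dd ^ n) i j) = fun k => if k ≤ n + 1 then c k else 0) ∧
        ((i : ℕ) = 1 ∧ (j : ℕ) = 0 → c (n + 1) = ∑ i ∈ Finset.range n, θ ^ q ^ i) ∧
        (¬ ((i : ℕ) = 1 ∧ (j : ℕ) = 0) → c (n + 1) = 0) := by
      intro i j
      rw [hpow n i j]
      split_ifs with h1 h2 h3 h4
      · refine ⟨fun k => ((n.choose k : ℕ) : K), ?_,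
          fun hc => absurd hc.1 (by omega), fun _ => ?_⟩
        · rw [rep_pad _ n _ (fun k hk => by
              rw [Nat.choose_eq_zero_of_lt hk, Nat.cast_zero]) (hu n) (n + 1) (by omega)]
          exact hcoeff (n + 1) _
        · show ((n.choose (n + 1) : ℕ) : K) = 0
          rw [Nat.choose_eq_zero_of_lt (by omega), Nat.cast_zero]
      · refine ⟨fun k => ((n.choose k : ℕ) : K), ?_,
          fun hc => absurd hc.2 (by omega), fun _ => ?_⟩
        · rw [rep_pad _ n _ (fun k hk => by
              rw [Nat.choose_eq_zero_of_lt hk, Nat.cast_zero]) (hu n) (n + 1) (by omega)]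
          exact hcoeff (n + 1) _
        · show ((n.choose (n + 1) : ℕ) : K) = 0
          rw [Nat.choose_eq_zero_of_lt (by omega), Nat.cast_zero]
      · refine ⟨s, ?_, fun _ => hstop, fun hc => absurd h3 hc⟩
        rw [hsS]; exact hcoeff (n + 1) s
      · refine ⟨b, ?_, fun hc => absurd hc h3, fun _ => hb0 (n + 1) (by omega)⟩
        rw [rep_pad _ n b hb0 hbw (n + 1) (by omega)]
        exact hcoeff (n + 1) b
      · refine ⟨fun _ => 0, ?_, fun hc => absurd hc h3, fun _ => rfl⟩
        rw [show (0 : R) = ∑ k ∈ Finset.range (n + 1 + 1), ι (0 : K) * τ ^ k by simp]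
        exact hcoeff (n + 1) _
    have hval : ∀ i j : Fin d, coeff ((Dd ^ n) i j) (n + 1)
        = if (i : ℕ) = 1 ∧ (j : ℕ) = 0 then ∑ i ∈ Finset.range n, θ ^ q ^ i else 0 := by
      intro i j
      obtain ⟨c, hc, hcpos, hcneg⟩ := hcof i j
      rw [congrFun hc (n + 1), if_pos (le_refl (n + 1))]
      by_cases hcond : (i : ℕ) = 1 ∧ (j : ℕ) = 0
      · rw [if_pos hcond, hcpos hcond]
      · rw [if_neg hcond, hcneg hcond]
    have hvan : ∀ k, n + 1 < k → ∀ i j : Fin d, coeff ((Dd ^ n) i j) k = 0 := by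
      intro k hk i j
      obtain ⟨c, hc, -, -⟩ := hcof i j
      rw [congrFun hc k, if_neg (by omega)]
    refine ⟨hval, hvan, ?_, ?_⟩
    · intro h0
      have h1 := congrFun (congrFun h0 i1) i0
      rw [Matrix.of_apply, Matrix.zero_apply, hval i1 i0, if_pos ⟨hi1, hi0⟩] at h1
      exact hx0 h1
    · refine ⟨2, ?_⟩
      ext i j
      rw [pow_two, Matrix.mul_apply, Matrix.zero_apply]
      refine Finset.sum_eq_zero fun m _ => ?_
      rw [Matrix.of_apply, Matrix.of_apply, hval i m, hval m j]
      by_cases h : (m : ℕ) = 0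
      · rw [if_neg (show ¬ ((m : ℕ) = 1 ∧ (j : ℕ) = 0) from fun hc' => by
          have := hc'.1; omega), mul_zero]
      · rw [if_neg (show ¬ ((i : ℕ) = 1 ∧ (m : ℕ) = 0) from fun hc' => h hc'.2), zero_mul]
  refine ⟨main, ?_⟩
  -- Part 2
  rintro ⟨p, hp1, r, A, hA, hPrep⟩
  have entry : ∀ i j : Fin d, (Dd ^ p) i j
      = ∑ k ∈ Finset.range (r + 1), ι (A k i j) * τ ^ k := by
    intro i j
    rw [hPrep, Matrix.sum_apply]
    refine Finset.sum_congr rfl fun k _ => ?_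
    rw [Matrix.diagonal_pow, Matrix.mul_diagonal, Matrix.map_apply, Pi.pow_apply]
  have hc2 : ∀ (i j : Fin d) (k : ℕ), coeff ((Dd ^ p) i j) k
      = if k ≤ r then A k i j else 0 := by
    intro i j k
    rw [entry i j]
    exact congrFun (hcoeff r fun k => A k i j) k
  obtain ⟨x, hx0, hxA, hvan, hM0, hMn⟩ := main p hp1
  haveI hNT : Nontrivial (Matrix (Fin d) (Fin d) K) := by
    refine ⟨1, 0, fun he => one_ne_zero (α := K) ?_⟩
    calc (1 : K) = (1 : Matrix (Fin d) (Fin d) K) i0 i0 := (Matrix.one_apply_eq i0).symm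
      _ = 0 := by rw [he]; rfl
  have h10 : coeff ((Dd ^ p) i1 i0) (p + 1) = x := by
    rw [hxA i1 i0, if_pos ⟨hi1, hi0⟩]
  have hsr : p + 1 ≤ r := by
    by_contra hcon
    rw [hc2 i1 i0 (p + 1), if_neg (by omega)] at h10
    exact hx0 h10.symm
  rcases eq_or_lt_of_le hsr with h | h
  · have hAr : A r = Matrix.of fun i j => coeff ((Dd ^ p) i j) (p + 1) := by
      ext i j
      rw [Matrix.of_apply, ← h, hc2 i j (p + 1), if_pos (h ▸ le_refl r)]
    rw [hAr] at hA
    exact hMn.not_isUnit hA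
  · have hAr : A r = 0 := by
      ext i j
      have h1 : coeff ((Dd ^ p) i j) r = 0 := hvan r (by omega) i j
      rw [hc2 i j r, if_pos (le_refl r)] at h1
      rw [h1, Matrix.zero_apply]
    rw [hAr] at hA
    exact not_isUnit_zero hA
end
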